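/- Let N ≥ 3 and x_1 ≥ x_2 ≥ ... ≥ x_N > 0. Define g(x_2,...,x_N) = x_1·(1 - ∏_{i=2}^N(1 - x_i/x_1)) - ∑_{i=2}^N x_i·∏_{j=2, j≠i}^N(1 - x_j/x_1). Then the partial derivative of g with respect to x_k equals ∑_{i=2, i≠k}^N (x_i/x_1)·∏_{j=2, j≠i,k}^N(1 - x_j/x_1), which is nonnegative, and g vanishes when x_2 = ... = x_N = 0; hence g ≥ 0. -/

import Mathlib

open Finset

lemma tele_aux (S : Finset ℕ) (c : ℕ → ℝ) (h0 : ∀ i ∈ S, 0 ≤ c i)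
    (h1 : ∀ i ∈ S, c i ≤ 1) :
    ∑ i ∈ S, c i * ∏ j ∈ S.erase i, (1 - c j) ≤ 1 - ∏ i ∈ S, (1 - c i) := by
  revert h0 h1
  induction S using Finset.induction_on with
  | empty => simp
  | insert a S ha ih =>
    intro h0 h1
    have h0' : ∀ i ∈ S, 0 ≤ c i := fun i hi => h0 i (Finset.mem_insert_of_mem hi)
    have h1' : ∀ i ∈ S, c i ≤ 1 := fun i hi => h1 i (Finset.mem_insert_of_mem hi)
    have hP0 : 0 ≤ ∏ i ∈ S, (1 - c i) :=
      Finset.prod_nonneg fun i hi => by linarith [h1' i hi]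
    have hP1 : ∏ i ∈ S, (1 - c i) ≤ 1 :=
      Finset.prod_le_one (fun i hi => by linarith [h1' i hi])
        (fun i hi => by linarith [h0' i hi])
    have hIH := ih h0' h1'
    have hca0 := h0 a (Finset.mem_insert_self a S)
    have hca1 := h1 a (Finset.mem_insert_self a S)
    rw [Finset.sum_insert ha, Finset.prod_insert ha, Finset.erase_insert ha]
    have hrw : ∑ i ∈ S, c i * ∏ j ∈ (insert a S).erase i, (1 - c j)
        = (1 - c a) * ∑ i ∈ S, c i * ∏ j ∈ S.erase i, (1 - c j) := by
      rw [Finset.mul_sum]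
      refine Finset.sum_congr rfl fun i hi => ?_
      have hia : i ≠ a := fun h => ha (h ▸ hi)
      rw [Finset.erase_insert_of_ne hia.symm,
        Finset.prod_insert (fun h => ha (Finset.mem_of_mem_erase h))]
      ring
    rw [hrw]
    set P := ∏ i ∈ S, (1 - c i)
    set L := ∑ i ∈ S, c i * ∏ j ∈ S.erase i, (1 - c j)
    nlinarith [mul_le_mul_of_nonneg_left hIH (by linarith : (0:ℝ) ≤ 1 - c a)]

/-- the differentiation argument: with
`g(y) = y₁(1 - ∏_{i=2}^N (1 - yᵢ/y₁)) - ∑_{i=2}^N yᵢ ∏_{j≠i} (1 - yⱼ/y₁)`,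
`∂g/∂x_k = ∑_{i≠k} (xᵢ/x₁) ∏_{j≠i,k} (1 - xⱼ/x₁) ≥ 0`, `g` vanishes when
`x₂ = ... = x_N = 0`, and hence `g ≥ 0`. -/
theorem stmt17 (N : ℕ) (hN : 3 ≤ N) (x : ℕ → ℝ)
    (hsort : ∀ i j, 1 ≤ i → i ≤ j → j ≤ N → x j ≤ x i)
    (hpos : ∀ i, 1 ≤ i → i ≤ N → 0 < x i) :
    let g : (ℕ → ℝ) → ℝ := fun y =>
      y 1 * (1 - ∏ i ∈ Finset.Icc 2 N, (1 - y i / y 1)) -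
        ∑ i ∈ Finset.Icc 2 N, y i * ∏ j ∈ (Finset.Icc 2 N).erase i, (1 - y j / y 1)
    (∀ k ∈ Finset.Icc 2 N,
      HasDerivAt (fun t => g (Function.update x k t))
        (∑ i ∈ (Finset.Icc 2 N).erase k,
          (x i / x 1) * ∏ j ∈ ((Finset.Icc 2 N).erase i).erase k, (1 - x j / x 1))
        (x k) ∧
      0 ≤ ∑ i ∈ (Finset.Icc 2 N).erase k,
          (x i / x 1) * ∏ j ∈ ((Finset.Icc 2 N).erase i).erase k, (1 - x j / x 1)) ∧
    (∀ y : ℕ → ℝ, y 1 = x 1 → (∀ i ∈ Finset.Icc 2 N, y i = 0) → g y = 0) ∧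
    0 ≤ g x := by
  intro g
  have hx1 : 0 < x 1 := hpos 1 le_rfl (by omega)
  have hx1' : x 1 ≠ 0 := ne_of_gt hx1
  have hc0 : ∀ i ∈ Finset.Icc 2 N, 0 ≤ x i / x 1 := by
    intro i hi
    rw [Finset.mem_Icc] at hi
    exact div_nonneg (hpos i (by omega) hi.2).le hx1.le
  have hc1 : ∀ i ∈ Finset.Icc 2 N, x i / x 1 ≤ 1 := by
    intro i hi
    rw [Finset.mem_Icc] at hi
    exact (div_le_one hx1).2 (hsort 1 i le_rfl (by omega) hi.2)
  refine ⟨?_, ?_, ?_⟩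
  · intro k hkS
    have hk := Finset.mem_Icc.1 hkS
    set S := Finset.Icc 2 N with hS
    set A := ∏ j ∈ S.erase k, (1 - x j / x 1) with hA
    set D := ∑ i ∈ S.erase k, (x i / x 1) * ∏ j ∈ (S.erase i).erase k, (1 - x j / x 1)
      with hD
    set M := ∑ i ∈ S.erase k, x i * ∏ j ∈ (S.erase i).erase k, (1 - x j / x 1) with hM
    have hDnn : 0 ≤ D := by
      refine Finset.sum_nonneg fun i hi => mul_nonneg (hc0 i (Finset.mem_of_mem_erase hi)) ?_
      refine Finset.prod_nonneg fun j hj => ?_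
      have hjS : j ∈ S := Finset.mem_of_mem_erase (Finset.mem_of_mem_erase hj)
      linarith [hc1 j hjS]
    refine ⟨?_, hDnn⟩
    have hDM : x 1 * D = M := by
      rw [hD, hM, Finset.mul_sum]
      refine Finset.sum_congr rfl fun i hi => ?_
      field_simp
    have hfun : (fun t => g (Function.update x k t))
        = fun t => (x 1 * (1 - A) - M) + D * t := by
      funext t
      simp only [g]
      have hupd1 : Function.update x k t 1 = x 1 :=
        Function.update_of_ne (by omega) _ _
      have hprod : ∏ i ∈ S, (1 - Function.update x k t i / Function.update x k t 1)
          = (1 - t / x 1) * A := by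
        rw [← Finset.mul_prod_erase S _ hkS, hupd1, Function.update_self]
        congr 1
        exact Finset.prod_congr rfl fun j hj => by
          rw [Function.update_of_ne (Finset.ne_of_mem_erase hj)]
      have hsum : ∑ i ∈ S, Function.update x k t i *
            ∏ j ∈ S.erase i, (1 - Function.update x k t j / Function.update x k t 1)
          = t * A + (1 - t / x 1) * M := by
        rw [← Finset.add_sum_erase S _ hkS]
        congr 1
        · rw [Function.update_self, hupd1]
          congr 1
          exact Finset.prod_congr rfl fun j hj => by
            rw [Function.update_of_ne (Finset.ne_of_mem_erase hj)]
        · rw [hM, Finset.mul_sum]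
          refine Finset.sum_congr rfl fun i hi => ?_
          have hik : i ≠ k := Finset.ne_of_mem_erase hi
          have hkSi : k ∈ S.erase i := Finset.mem_erase.2 ⟨hik.symm, hkS⟩
          rw [Function.update_of_ne hik, hupd1,
            ← Finset.mul_prod_erase (S.erase i) _ hkSi, Function.update_self]
          have : ∏ j ∈ (S.erase i).erase k,
              (1 - Function.update x k t j / x 1)
              = ∏ j ∈ (S.erase i).erase k, (1 - x j / x 1) :=
            Finset.prod_congr rfl fun j hj => by
              rw [Function.update_of_ne (Finset.ne_of_mem_erase hj)]
          rw [this]; ring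
      rw [hprod, hsum, hupd1, ← hDM]
      field_simp
      ring
    rw [hfun]
    simpa using ((hasDerivAt_id (x k)).const_mul D).const_add (x 1 * (1 - A) - M)
  · intro y hy1 hy0
    simp only [g]
    have h1 : ∏ i ∈ Finset.Icc 2 N, (1 - y i / y 1) = 1 :=
      Finset.prod_eq_one fun i hi => by rw [hy0 i hi]; simp
    have h2 : ∑ i ∈ Finset.Icc 2 N, y i * ∏ j ∈ (Finset.Icc 2 N).erase i,
        (1 - y j / y 1) = 0 :=
      Finset.sum_eq_zero fun i hi => by rw [hy0 i hi]; ring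
    rw [h1, h2]; ring
  · have key := tele_aux (Finset.Icc 2 N) (fun i => x i / x 1) hc0 hc1
    simp only [g]
    have hsum : ∑ i ∈ Finset.Icc 2 N, x i * ∏ j ∈ (Finset.Icc 2 N).erase i,
          (1 - x j / x 1)
        = x 1 * ∑ i ∈ Finset.Icc 2 N, (x i / x 1) *
            ∏ j ∈ (Finset.Icc 2 N).erase i, (1 - x j / x 1) := by
      rw [Finset.mul_sum]
      refine Finset.sum_congr rfl fun i hi => ?_
      field_simp
    rw [hsum]
    set P := ∏ i ∈ Finset.Icc 2 N, (1 - x i / x 1)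
    set L := ∑ i ∈ Finset.Icc 2 N, (x i / x 1) *
      ∏ j ∈ (Finset.Icc 2 N).erase i, (1 - x j / x 1)
    have key' : L ≤ 1 - P := key
    nlinarith [mul_le_mul_of_nonneg_left key' hx1.le]
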